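/- With the tensor-train projection setup (tensor A ∈ ℝ^{I₁×⋯×I_N}, orthonormal matrices Q₁,…,Q_{N−1}, the recursively defined matrices A₁,…,A_{N−1}, and the TT reconstruction B), the Frobenius-norm approximation error satisfies ‖A − B‖_F ≤ Σ_{n=1}^{N−1} ‖A_n − Q_n Q_nᵀ A_n‖_F. -/

import Mathlib

open Matrix
open scoped BigOperators

noncomputable section

/-- Frobenius norm of a real matrix. -/
def frobNorm {m n : ℕ} (A : Matrix (Fin m) (Fin n) ℝ) : ℝ :=
  Real.sqrt (∑ i, ∑ j, A i j ^ 2)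

/-- Nonincreasing rearrangement of a finite tuple of reals. -/
def sortedDesc {n : ℕ} (f : Fin n → ℝ) : Fin n → ℝ :=
  fun k => - ((fun i => - f i) ∘ Tuple.sort (fun i => - f i)) k

/-- `sval A k` is the `(k+1)`-st largest singular value of `A` (i.e. 0-based index `k`),
the square root of the `(k+1)`-st largest eigenvalue of `AᵀA`; it is `0` for `k ≥ n`
(in particular for `k ≥ min m n`). -/
def sval {m n : ℕ} (A : Matrix (Fin m) (Fin n) ℝ) (k : ℕ) : ℝ :=
  if h : k < n then
    Real.sqrt (sortedDesc (Matrix.isHermitian_iff_isSymm.mpr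
      (Matrix.IsSymm.ext (fun i j => by simp [Matrix.mul_apply, mul_comm])) :
      (Aᵀ * A).IsHermitian).eigenvalues ⟨k, h⟩)
  else 0

/-- Spectral norm (ℓ²→ℓ² operator norm) of a real matrix: its largest singular value. -/
def specNorm {m n : ℕ} (A : Matrix (Fin m) (Fin n) ℝ) : ℝ := sval A 0

/-- `tailDelta A μ = Δ_{μ+1}(A) = sqrt (Σ_{k=μ+1}^{min(m,n)} σ_k(A)²)` (with 1-based σ's,
so 0-based indices `μ, …, min m n - 1`). -/
def tailDelta {m n : ℕ} (A : Matrix (Fin m) (Fin n) ℝ) (μ : ℕ) : ℝ :=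
  Real.sqrt (∑ k ∈ Finset.Ico μ (min m n), sval A k ^ 2)

end

noncomputable section

/-- Value of a dependent tuple at a natural-number position (`0` out of range). -/
def pv {N : ℕ} {g : Fin N → ℕ} (x : (k : Fin N) → Fin (g k)) (k : ℕ) : ℕ :=
  if h : k < N then (x ⟨k, h⟩ : ℕ) else 0

/-- Mixed-radix (little-endian, MATLAB-style) linearization of the components `a, …, b-1`
(0-based) of a multi-index `x` of a tensor with dimensions `I 1, …, I N`
(the 0-based component `k` has dimension `I (k+1)`):
`ttCode I x a b = Σ_{k∈[a,b)} x_k · Π_{t∈[a,k)} I (t+1)`. -/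
def ttCode (I : ℕ → ℕ) {N : ℕ} (x : (k : Fin N) → Fin (I ((k : ℕ) + 1))) (a b : ℕ) : ℕ :=
  ∑ k ∈ Finset.Ico a b, pv x k * ∏ t ∈ Finset.Ico a k, I (t + 1)

/-- Frobenius norm of a tensor: square root of the sum of squares of all entries. -/
def tnorm {N : ℕ} {g : Fin N → ℕ} (T : ((k : Fin N) → Fin (g k)) → ℝ) : ℝ :=
  Real.sqrt (∑ x, T x ^ 2)

/-- Entry of a matrix at natural-number positions (`0` out of range). -/
def matExt {p q : ℕ} (M : Matrix (Fin p) (Fin q) ℝ) (a b : ℕ) : ℝ :=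
  if h : a < p ∧ b < q then M ⟨a, h.1⟩ ⟨b, h.2⟩ else 0

end
section TTAux

open Finset

lemma matExt_of_lt {p q : ℕ} (M : Matrix (Fin p) (Fin q) ℝ) {a b : ℕ} (ha : a < p) (hb : b < q) :
    matExt M a b = M ⟨a, ha⟩ ⟨b, hb⟩ := dif_pos ⟨ha, hb⟩

lemma matExt_sub {p q : ℕ} (M M' : Matrix (Fin p) (Fin q) ℝ) (a b : ℕ) :
    matExt (M - M') a b = matExt M a b - matExt M' a b := by
  unfold matExt; split <;> simp [Matrix.sub_apply]

lemma pv_lt {N : ℕ} {g : Fin N → ℕ} (x : (k : Fin N) → Fin (g k)) {k : ℕ} (h : k < N) :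
    pv x k < g ⟨k, h⟩ := by
  simp only [pv, dif_pos h]; exact (x ⟨k, h⟩).2

lemma pv_eq {N : ℕ} {g : Fin N → ℕ} (x : (k : Fin N) → Fin (g k)) {k : ℕ} (h : k < N) :
    pv x k = (x ⟨k, h⟩ : ℕ) := dif_pos h

lemma pv_snoc_of_lt {n : ℕ} {g : Fin (n+1) → ℕ} (j : (k : Fin n) → Fin (g k.castSucc))
    (s : Fin (g (Fin.last n))) {k : ℕ} (hk : k < n) :
    pv (Fin.snoc j s) k = pv j k := by
  rw [pv_eq _ (by omega : k < n + 1), pv_eq _ hk]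
  exact congrArg _ (Fin.snoc_castSucc _ _ ⟨k, hk⟩)

lemma pv_snoc_last {n : ℕ} {g : Fin (n+1) → ℕ} (j : (k : Fin n) → Fin (g k.castSucc))
    (s : Fin (g (Fin.last n))) :
    pv (Fin.snoc j s) n = (s : ℕ) := by
  rw [pv_eq _ (by omega : n < n + 1)]
  exact congrArg _ (Fin.snoc_last _ _)


lemma pv_lt' {N : ℕ} {I : ℕ → ℕ} (x : (k : Fin N) → Fin (I ((k : ℕ) + 1))) {k : ℕ}
    (h : k < N) : pv x k < I (k + 1) := pv_lt x h

lemma ttCode_of_le {I : ℕ → ℕ} {N : ℕ} (x : (k : Fin N) → Fin (I ((k : ℕ) + 1)))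
    {a b : ℕ} (h : b ≤ a) : ttCode I x a b = 0 := by
  unfold ttCode
  rw [Finset.Ico_eq_empty (by omega), Finset.sum_empty]

lemma ttCode_succ {I : ℕ → ℕ} {N : ℕ} (x : (k : Fin N) → Fin (I ((k : ℕ) + 1)))
    {a b : ℕ} (h : a < b) :
    ttCode I x a b = pv x a + I (a + 1) * ttCode I x (a + 1) b := by
  unfold ttCode
  rw [Finset.sum_eq_sum_Ico_succ_bot h, Finset.mul_sum]
  congr 1
  · simp
  · refine Finset.sum_congr rfl fun k hk => ?_
    rw [Finset.mem_Ico] at hk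
    rw [Finset.prod_eq_prod_Ico_succ_bot (by omega : a < k)]
    ring

lemma ttCode_lt_aux {I : ℕ → ℕ} {N : ℕ} (x : (k : Fin N) → Fin (I ((k : ℕ) + 1)))
    {b : ℕ} (hb : b ≤ N) :
    ∀ d a, b ≤ a + d → ttCode I x a b < ∏ t ∈ Finset.Ico a b, I (t + 1) := by
  intro d
  induction d with
  | zero =>
    intro a h
    rw [ttCode_of_le x (by omega), Finset.Ico_eq_empty (by omega), Finset.prod_empty]
    omega
  | succ d ih =>
    intro a h
    rcases le_or_gt b a with hba | hab
    · rw [ttCode_of_le x hba, Finset.Ico_eq_empty (by omega), Finset.prod_empty]; omega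
    · rw [ttCode_succ x hab, Finset.prod_eq_prod_Ico_succ_bot hab]
      have h1 : pv x a < I (a + 1) := pv_lt' x (by omega : a < N)
      have h2 := ih (a + 1) (by omega)
      calc pv x a + I (a + 1) * ttCode I x (a + 1) b
          < I (a + 1) * (ttCode I x (a + 1) b + 1) := by
            rw [Nat.mul_add, Nat.mul_one]; omega
        _ ≤ I (a + 1) * ∏ t ∈ Finset.Ico (a + 1) b, I (t + 1) :=
            Nat.mul_le_mul_left _ (by omega)

lemma ttCode_lt {I : ℕ → ℕ} {N : ℕ} (x : (k : Fin N) → Fin (I ((k : ℕ) + 1)))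
    {a b : ℕ} (hb : b ≤ N) :
    ttCode I x a b < ∏ t ∈ Finset.Ico a b, I (t + 1) :=
  ttCode_lt_aux x hb b a (by omega)

lemma ttCode_mod {I : ℕ → ℕ} {N : ℕ} (x : (k : Fin N) → Fin (I ((k : ℕ) + 1)))
    {a b : ℕ} (ha : a < b) (hb : b ≤ N) :
    ttCode I x a b % I (a + 1) = pv x a := by
  rw [ttCode_succ x ha, Nat.add_mul_mod_self_left,
    Nat.mod_eq_of_lt (pv_lt' x (by omega : a < N))]

lemma ttCode_div {I : ℕ → ℕ} {N : ℕ} (x : (k : Fin N) → Fin (I ((k : ℕ) + 1)))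
    {a b : ℕ} (ha : a < b) (hb : b ≤ N) :
    ttCode I x a b / I (a + 1) = ttCode I x (a + 1) b := by
  have hI : 0 < I (a + 1) := Nat.pos_of_ne_zero (by
    intro h0
    have := pv_lt' x (by omega : a < N)
    omega)
  rw [ttCode_succ x ha, Nat.add_mul_div_left _ _ hI,
    Nat.div_eq_of_lt (pv_lt' x (by omega : a < N)), Nat.zero_add]

lemma ttCode_inj {I : ℕ → ℕ} {N : ℕ} :
    ∀ (d a : ℕ), N ≤ a + d → ∀ (x y : (k : Fin N) → Fin (I ((k : ℕ) + 1))),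
      (∀ k : Fin N, (k : ℕ) < a → x k = y k) →
      ttCode I x a N = ttCode I y a N → x = y := by
  intro d
  induction d with
  | zero => intro a h x y hagree _; exact funext fun k => hagree k (by omega)
  | succ d ih =>
    intro a h x y hagree hc
    rcases le_or_gt N a with hNa | haN
    · exact funext fun k => hagree k (by have := k.2; omega)
    · refine ih (a + 1) (by omega) x y ?_ ?_
      · intro k hk
        rcases Nat.lt_or_ge (k : ℕ) a with h' | h'
        · exact hagree k h'
        · have hka : (k : ℕ) = a := by omega
          have hm : pv x a = pv y a := by
            rw [← ttCode_mod x haN le_rfl, ← ttCode_mod y haN le_rfl, hc]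
          rw [pv_eq x haN, pv_eq y haN] at hm
          have hkeq : k = ⟨a, haN⟩ := Fin.ext hka
          subst hkeq
          exact Fin.ext hm
      · rw [← ttCode_div x haN le_rfl, ← ttCode_div y haN le_rfl, hc]

end TTAux

noncomputable section TTAux2

open Finset

variable (N : ℕ) (I r : ℕ → ℕ)
variable (Q : (n : ℕ) → Matrix (Fin (r (n - 1) * I n)) (Fin (r n)) ℝ)

/-- One contraction/reshape step. -/
def stepn (n : ℕ)
    (M : Matrix (Fin (r (n + 1) * I (n + 2))) (Fin (∏ t ∈ Finset.Ico (n + 2) N, I (t + 1))) ℝ) :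
    Matrix (Fin (r n * I (n + 1))) (Fin (∏ t ∈ Finset.Ico (n + 1) N, I (t + 1))) ℝ :=
  fun a b => ∑ s : Fin (r (n + 1)),
    Q (n + 1) a s *
      matExt M ((s : ℕ) + r (n + 1) * ((b : ℕ) % I (n + 2))) ((b : ℕ) / I (n + 2))

/-- The tensor obtained by contracting `M` (at level `n+1`) with `Q (n), …, Q 1`. -/
def Cfun : (n : ℕ) →
    Matrix (Fin (r n * I (n + 1))) (Fin (∏ t ∈ Finset.Ico (n + 1) N, I (t + 1))) ℝ →
    ((k : Fin N) → Fin (I ((k : ℕ) + 1))) → ℝ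
  | 0, M, x => matExt M (pv x 0) (ttCode I x 1 N)
  | (n + 1), M, x => Cfun n (stepn N I r Q n M) x

lemma stepn_sub (n : ℕ) (M M' :
    Matrix (Fin (r (n + 1) * I (n + 2))) (Fin (∏ t ∈ Finset.Ico (n + 2) N, I (t + 1))) ℝ) :
    stepn N I r Q n (M - M') = stepn N I r Q n M - stepn N I r Q n M' := by
  ext a b
  simp [stepn, matExt_sub, mul_sub, Finset.sum_sub_distrib]

lemma Cfun_sub : ∀ (n : ℕ)
    (M M' : Matrix (Fin (r n * I (n + 1))) (Fin (∏ t ∈ Finset.Ico (n + 1) N, I (t + 1))) ℝ)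
    (x : (k : Fin N) → Fin (I ((k : ℕ) + 1))),
    Cfun N I r Q n (M - M') x = Cfun N I r Q n M x - Cfun N I r Q n M' x
  | 0, M, M', x => by simp [Cfun, matExt_sub]
  | (n + 1), M, M', x => by
    rw [Cfun, stepn_sub, Cfun_sub n]; rfl

/-- Frobenius norm (sum of squares) invariance under left multiplication by an
orthonormal matrix. -/
lemma ortho_sum_sq {m k p : ℕ} (U : Matrix (Fin m) (Fin k) ℝ) (hU : Uᵀ * U = 1)
    (X : Matrix (Fin k) (Fin p) ℝ) :
    ∑ a, ∑ b, ((U * X) a b) ^ 2 = ∑ s, ∑ b, (X s b) ^ 2 := by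
  have key : ∀ (m' : ℕ) (Y : Matrix (Fin m') (Fin p) ℝ),
      ∑ a, ∑ b, (Y a b) ^ 2 = ∑ b, (Yᵀ * Y) b b := by
    intro m' Y
    rw [Finset.sum_comm]
    refine Finset.sum_congr rfl fun b _ => ?_
    simp [Matrix.mul_apply, Matrix.transpose_apply, sq]
  rw [key, key, show (U * X)ᵀ * (U * X) = Xᵀ * X by
    rw [Matrix.transpose_mul, Matrix.mul_assoc, ← Matrix.mul_assoc Uᵀ, hU, Matrix.one_mul]]

lemma mul_pos_left {a b : ℕ} (h : 0 < a * b) : 0 < a :=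
  Nat.pos_of_ne_zero fun ha => by subst ha; simp at h

lemma mul_pos_right {a b : ℕ} (h : 0 < a * b) : 0 < b :=
  Nat.pos_of_ne_zero fun hb => by subst hb; simp at h

/-- Reshaping bijection for sums of squares. -/
lemma sum_mixed {R J P : ℕ} (M : Matrix (Fin (R * J)) (Fin P) ℝ) :
    ∑ s : Fin R, ∑ b : Fin (J * P),
      (matExt M ((s : ℕ) + R * ((b : ℕ) % J)) ((b : ℕ) / J)) ^ 2 =
    ∑ p, ∑ c, (M p c) ^ 2 := by
  have hφb : ∀ (s : Fin R) (b : Fin (J * P)),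
      ((s : ℕ) + R * ((b : ℕ) % J) < R * J) ∧ ((b : ℕ) / J < P) := by
    intro s b
    have hJ : 0 < J := mul_pos_left (lt_of_le_of_lt (Nat.zero_le _) b.2)
    constructor
    · have h1 : (s : ℕ) + R * ((b : ℕ) % J) < R * (((b : ℕ) % J) + 1) := by
        rw [Nat.mul_add, Nat.mul_one]; have := s.2; omega
      exact lt_of_lt_of_le h1 (Nat.mul_le_mul_left _ (Nat.mod_lt _ hJ))
    · exact Nat.div_lt_of_lt_mul b.2
  have l1 := Fintype.sum_prod_type (f := fun sb : Fin R × Fin (J * P) =>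
      (matExt M ((sb.1 : ℕ) + R * ((sb.2 : ℕ) % J)) ((sb.2 : ℕ) / J)) ^ 2)
  have l2 := Fintype.sum_prod_type (f := fun pc : Fin (R * J) × Fin P => (M pc.1 pc.2) ^ 2)
  rw [← l1, ← l2]
  set φ : Fin R × Fin (J * P) → Fin (R * J) × Fin P :=
    fun sb => (⟨(sb.1 : ℕ) + R * ((sb.2 : ℕ) % J), (hφb sb.1 sb.2).1⟩,
      ⟨(sb.2 : ℕ) / J, (hφb sb.1 sb.2).2⟩) with hφ
  have hinj : Function.Injective φ := by
    rintro ⟨s, b⟩ ⟨s', b'⟩ h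
    have hR : 0 < R := s.pos
    have hJ : 0 < J := mul_pos_left (lt_of_le_of_lt (Nat.zero_le _) b.2)
    simp only [hφ, Prod.mk.injEq, Fin.mk.injEq] at h
    obtain ⟨h1, h2⟩ := h
    have hs : (s : ℕ) = (s' : ℕ) := by
      have := congrArg (· % R) h1
      simpa [Nat.add_mul_mod_self_left, Nat.mod_eq_of_lt s.2, Nat.mod_eq_of_lt s'.2] using this
    have hm : (b : ℕ) % J = (b' : ℕ) % J := by
      rw [hs] at h1
      exact Nat.eq_of_mul_eq_mul_left hR (by omega)
    have hb : (b : ℕ) = (b' : ℕ) := by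
      calc (b : ℕ) = (b : ℕ) % J + J * ((b : ℕ) / J) := (Nat.mod_add_div _ _).symm
        _ = (b' : ℕ) % J + J * ((b' : ℕ) / J) := by rw [hm, h2]
        _ = (b' : ℕ) := Nat.mod_add_div _ _
    exact Prod.ext (Fin.ext hs) (Fin.ext hb)
  have hbij : Function.Bijective φ := by
    rw [Fintype.bijective_iff_injective_and_card]
    exact ⟨hinj, by simp [Fintype.card_prod, Fintype.card_fin]; ring⟩
  refine Fintype.sum_bijective φ hbij _ _ ?_
  rintro ⟨s, b⟩
  exact congrArg (· ^ 2) (matExt_of_lt M (hφb s b).1 (hφb s b).2)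

end TTAux2

noncomputable section TTAux3

open Finset

variable {N : ℕ} {I r : ℕ → ℕ}
variable {Q : (n : ℕ) → Matrix (Fin (r (n - 1) * I n)) (Fin (r n)) ℝ}

/-- The contraction `Cfun` preserves the sum of squares. -/
lemma Cfun_sum_sq (hr0 : r 0 = 1)
    (hQ : ∀ k, 1 ≤ k → k ≤ N - 1 → (Q k)ᵀ * Q k = 1) :
    ∀ n, n + 1 ≤ N →
    ∀ M : Matrix (Fin (r n * I (n + 1))) (Fin (∏ t ∈ Finset.Ico (n + 1) N, I (t + 1))) ℝ,
    ∑ x, (Cfun N I r Q n M x) ^ 2 = ∑ a, ∑ b, (M a b) ^ 2 := by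
  intro n
  induction n with
  | zero =>
    intro hn M
    have hN : 0 < N := by omega
    have hbnd : ∀ x : (k : Fin N) → Fin (I ((k : ℕ) + 1)),
        pv x 0 < r 0 * I 1 ∧ ttCode I x 1 N < ∏ t ∈ Finset.Ico 1 N, I (t + 1) :=
      fun x => ⟨by rw [hr0, one_mul]; exact pv_lt' x hN, ttCode_lt x le_rfl⟩
    have l2 := Fintype.sum_prod_type
      (f := fun pc : Fin (r 0 * I 1) × Fin (∏ t ∈ Finset.Ico 1 N, I (t + 1)) =>
        (M pc.1 pc.2) ^ 2)
    rw [← l2]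
    set φ : ((k : Fin N) → Fin (I ((k : ℕ) + 1))) →
        Fin (r 0 * I 1) × Fin (∏ t ∈ Finset.Ico 1 N, I (t + 1)) :=
      fun x => (⟨pv x 0, (hbnd x).1⟩, ⟨ttCode I x 1 N, (hbnd x).2⟩) with hφ
    have hinj : Function.Injective φ := by
      intro x y h
      simp only [hφ, Prod.mk.injEq, Fin.mk.injEq] at h
      obtain ⟨h1, h2⟩ := h
      refine ttCode_inj N 1 (by omega) x y ?_ h2
      intro k hk
      have hk' : (k : ℕ) = 0 := by omega
      have hk0 : k = ⟨0, hN⟩ := Fin.ext (by simp [hk'])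
      subst hk0
      rw [pv_eq x hN, pv_eq y hN] at h1
      exact Fin.ext h1
    have hbij : Function.Bijective φ := by
      rw [Fintype.bijective_iff_injective_and_card]
      refine ⟨hinj, ?_⟩
      rw [Fintype.card_prod, Fintype.card_pi]
      simp only [Fintype.card_fin]
      rw [Fin.prod_univ_eq_prod_range (fun k => I (k + 1)) N, Finset.range_eq_Ico,
        Finset.prod_eq_prod_Ico_succ_bot hN, hr0, one_mul]
    refine Fintype.sum_bijective φ hbij _ _ ?_
    intro x
    exact congrArg (· ^ 2) (matExt_of_lt M (hbnd x).1 (hbnd x).2)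
  | succ n ih =>
    intro hn M
    have lcf : ∀ x, Cfun N I r Q (n + 1) M x = Cfun N I r Q n (stepn N I r Q n M) x :=
      fun x => rfl
    simp only [lcf]
    rw [ih (by omega) (stepn N I r Q n M)]
    set X : Matrix (Fin (r (n + 1))) (Fin (∏ t ∈ Finset.Ico (n + 1) N, I (t + 1))) ℝ :=
      fun s b => matExt M ((s : ℕ) + r (n + 1) * ((b : ℕ) % I (n + 2))) ((b : ℕ) / I (n + 2))
      with hX
    have hstep : stepn N I r Q n M = Q (n + 1) * X := by
      ext a b
      rw [Matrix.mul_apply]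
      rfl
    rw [hstep]
    refine Eq.trans (ortho_sum_sq (Q (n + 1)) (hQ (n + 1) (by omega) (by omega)) X) ?_
    have hprod : ∏ t ∈ Finset.Ico (n + 1) N, I (t + 1)
        = I (n + 2) * ∏ t ∈ Finset.Ico (n + 2) N, I (t + 1) :=
      Finset.prod_eq_prod_Ico_succ_bot (by omega : n + 1 < N) _
    have hcast : ∀ s : Fin (r (n + 1)),
        ∑ b, (X s b) ^ 2 =
        ∑ b' : Fin (I (n + 2) * ∏ t ∈ Finset.Ico (n + 2) N, I (t + 1)),
          (matExt M ((s : ℕ) + r (n + 1) * ((b' : ℕ) % I (n + 2)))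
            ((b' : ℕ) / I (n + 2))) ^ 2 := by
      intro s
      refine Fintype.sum_equiv (finCongr hprod) _ _ ?_
      intro b
      simp [hX]
    exact (Finset.sum_congr rfl fun s _ => hcast s).trans (sum_mixed M)

end TTAux3

noncomputable section TTAux4

open Finset

variable {N : ℕ} {I r : ℕ → ℕ}
variable {Q : (n : ℕ) → Matrix (Fin (r (n - 1) * I n)) (Fin (r n)) ℝ}

lemma sum_snoc {n : ℕ} (g : ℕ → ℕ) (F : ((k : Fin (n + 1)) → Fin (g (k : ℕ))) → ℝ) :
    ∑ j, F j = ∑ s : Fin (g n), ∑ j : (k : Fin n) → Fin (g (k : ℕ)), F (Fin.snoc j s) := by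
  rw [← Equiv.sum_comp (Fin.snocEquiv (fun k : Fin (n + 1) => Fin (g (k : ℕ)))) F]
  rw [Fintype.sum_prod_type]
  rfl

set_option maxHeartbeats 1000000 in
lemma Cfun_formula (hr0 : r 0 = 1) :
    ∀ n, n + 1 ≤ N →
    ∀ (M : Matrix (Fin (r n * I (n + 1))) (Fin (∏ t ∈ Finset.Ico (n + 1) N, I (t + 1))) ℝ)
      (x : (k : Fin N) → Fin (I ((k : ℕ) + 1))),
    Cfun N I r Q n M x =
      ∑ j : (k : Fin n) → Fin (r ((k : ℕ) + 1)),
        (∏ k ∈ Finset.range n,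
          matExt (Q (k + 1)) ((if k = 0 then 0 else pv j (k - 1)) + r k * pv x k) (pv j k)) *
        matExt M ((if n = 0 then 0 else pv j (n - 1)) + r n * pv x n)
          (ttCode I x (n + 1) N) := by
  intro n
  induction n with
  | zero =>
    intro hn M x
    rw [Fintype.sum_unique]
    simp [Cfun, hr0]
  | succ n ih =>
    intro hn M x
    have hn1 : n + 1 ≤ N := by omega
    have lcf : Cfun N I r Q (n + 1) M x = Cfun N I r Q n (stepn N I r Q n M) x := rfl
    rw [lcf, ih hn1 (stepn N I r Q n M) x]
    have hb : ttCode I x (n + 1) N < ∏ t ∈ Finset.Ico (n + 1) N, I (t + 1) :=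
      ttCode_lt x le_rfl
    have hmod : ttCode I x (n + 1) N % I (n + 2) = pv x (n + 1) :=
      ttCode_mod x (by omega) le_rfl
    have hdiv : ttCode I x (n + 1) N / I (n + 2) = ttCode I x (n + 2) N :=
      ttCode_div x (by omega) le_rfl
    have ha : ∀ j : (k : Fin n) → Fin (r ((k : ℕ) + 1)),
        (if n = 0 then 0 else pv j (n - 1)) + r n * pv x n < r n * I (n + 1) := by
      intro j
      have hx : pv x n < I (n + 1) := pv_lt' x (by omega)
      rcases Nat.eq_zero_or_pos n with h0 | hpos
      · subst h0
        rw [if_pos rfl, hr0]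
        omega
      · rw [if_neg (by omega)]
        have hj : pv j (n - 1) < r ((n - 1) + 1) := pv_lt j (by omega : n - 1 < n)
        rw [show n - 1 + 1 = n from by omega] at hj
        calc (pv j (n - 1)) + r n * pv x n < r n * (pv x n + 1) := by
              rw [Nat.mul_add, Nat.mul_one]; omega
          _ ≤ r n * I (n + 1) := Nat.mul_le_mul_left _ (by omega)
    have hterm : ∀ j : (k : Fin n) → Fin (r ((k : ℕ) + 1)),
        matExt (stepn N I r Q n M) ((if n = 0 then 0 else pv j (n - 1)) + r n * pv x n)
          (ttCode I x (n + 1) N)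
        = ∑ s : Fin (r (n + 1)),
            matExt (Q (n + 1)) ((if n = 0 then 0 else pv j (n - 1)) + r n * pv x n) (s : ℕ) *
            matExt M ((s : ℕ) + r (n + 1) * pv x (n + 1)) (ttCode I x (n + 2) N) := by
      intro j
      rw [matExt_of_lt _ (ha j) hb]
      show (∑ s : Fin (r (n + 1)),
          Q (n + 1) ⟨_, ha j⟩ s *
            matExt M ((s : ℕ) + r (n + 1) * (ttCode I x (n + 1) N % I (n + 2)))
              (ttCode I x (n + 1) N / I (n + 2))) = _
      rw [hmod, hdiv]
      refine Finset.sum_congr rfl fun s _ => ?_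
      congr 1
      rw [matExt_of_lt (Q (n + 1)) (ha j) s.2]
    calc
      ∑ j : (k : Fin n) → Fin (r ((k : ℕ) + 1)),
        (∏ k ∈ Finset.range n,
          matExt (Q (k + 1)) ((if k = 0 then 0 else pv j (k - 1)) + r k * pv x k) (pv j k)) *
        matExt (stepn N I r Q n M) ((if n = 0 then 0 else pv j (n - 1)) + r n * pv x n)
          (ttCode I x (n + 1) N)
        = ∑ j : (k : Fin n) → Fin (r ((k : ℕ) + 1)), ∑ s : Fin (r (n + 1)),
            (∏ k ∈ Finset.range n,
              matExt (Q (k + 1)) ((if k = 0 then 0 else pv j (k - 1)) + r k * pv x k)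
                (pv j k)) *
            (matExt (Q (n + 1)) ((if n = 0 then 0 else pv j (n - 1)) + r n * pv x n) (s : ℕ) *
             matExt M ((s : ℕ) + r (n + 1) * pv x (n + 1)) (ttCode I x (n + 2) N)) := by
          refine Finset.sum_congr rfl fun j _ => ?_
          rw [hterm j, Finset.mul_sum]
      _ = ∑ s : Fin (r (n + 1)), ∑ j : (k : Fin n) → Fin (r ((k : ℕ) + 1)),
            (∏ k ∈ Finset.range n,
              matExt (Q (k + 1)) ((if k = 0 then 0 else pv j (k - 1)) + r k * pv x k)
                (pv j k)) *
            (matExt (Q (n + 1)) ((if n = 0 then 0 else pv j (n - 1)) + r n * pv x n) (s : ℕ) *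
             matExt M ((s : ℕ) + r (n + 1) * pv x (n + 1)) (ttCode I x (n + 2) N)) :=
          Finset.sum_comm
      _ = ∑ j : (k : Fin (n + 1)) → Fin (r ((k : ℕ) + 1)),
          (∏ k ∈ Finset.range (n + 1),
            matExt (Q (k + 1)) ((if k = 0 then 0 else pv j (k - 1)) + r k * pv x k)
              (pv j k)) *
          matExt M ((if n + 1 = 0 then 0 else pv j (n + 1 - 1)) + r (n + 1) * pv x (n + 1))
            (ttCode I x (n + 1 + 1) N) := by
          rw [sum_snoc (fun k => r (k + 1))
            (fun j : (k : Fin (n + 1)) → Fin (r ((k : ℕ) + 1)) =>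
              (∏ k ∈ Finset.range (n + 1),
                matExt (Q (k + 1)) ((if k = 0 then 0 else pv j (k - 1)) + r k * pv x k)
                  (pv j k)) *
              matExt M ((if n + 1 = 0 then 0 else pv j (n + 1 - 1))
                  + r (n + 1) * pv x (n + 1))
                (ttCode I x (n + 1 + 1) N))]
          refine Finset.sum_congr rfl fun s _ => Finset.sum_congr rfl fun j _ => ?_
          set js : (k : Fin (n + 1)) → Fin (r ((k : ℕ) + 1)) :=
            Fin.snoc (α := fun k : Fin (n + 1) => Fin (r ((k : ℕ) + 1))) j s with hjs
          show _ = (∏ k ∈ Finset.range (n + 1),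
              matExt (Q (k + 1))
                ((if k = 0 then 0 else pv js (k - 1)) + r k * pv x k)
                (pv js k)) *
            matExt M (pv js n + r (n + 1) * pv x (n + 1))
              (ttCode I x (n + 2) N)
          have hlast : pv js n = (s : ℕ) := by rw [hjs]; exact pv_snoc_last (g := fun k : Fin (n + 1) => r ((k : ℕ) + 1)) j s
          have hlt : ∀ k, k < n → pv js k = pv j k := by
            intro k hk; rw [hjs]; exact pv_snoc_of_lt (g := fun k : Fin (n + 1) => r ((k : ℕ) + 1)) j s hk
          rw [hlast, Finset.prod_range_succ, hlast]
          rw [show (if n = 0 then 0 else pv js (n - 1))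
              = (if n = 0 then 0 else pv j (n - 1)) by
            rcases Nat.eq_zero_or_pos n with h0 | hpos
            · simp [h0]
            · rw [if_neg (by omega), if_neg (by omega), hlt _ (by omega)]]
          rw [show (∏ k ∈ Finset.range n,
              matExt (Q (k + 1))
                ((if k = 0 then 0 else pv js (k - 1)) + r k * pv x k)
                (pv js k))
              = ∏ k ∈ Finset.range n,
                matExt (Q (k + 1)) ((if k = 0 then 0 else pv j (k - 1)) + r k * pv x k)
                  (pv j k) from
            Finset.prod_congr rfl fun k hk => by
              rw [Finset.mem_range] at hk
              rw [hlt _ hk]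
              congr 2
              rcases Nat.eq_zero_or_pos k with h0 | hpos
              · simp [h0]
              · rw [if_neg (by omega), if_neg (by omega), hlt _ (by omega)]]
          ring

end TTAux4


set_option maxHeartbeats 1000000 in
/-- TT projection error bound:
`‖A − B‖_F ≤ Σ_{n=1}^{N−1} ‖A_n − Q_n Q_nᵀ A_n‖_F`. -/
theorem tt_error_le_sum
    (N : ℕ) (hN : 2 ≤ N)
    -- dimensions `I 1, …, I N` and TT-ranks `r 0 = μ₀ = 1, r 1 = μ₁, …, r N = μ_N = 1`
    (I r : ℕ → ℕ) (hr0 : r 0 = 1) (hrN : r N = 1) (hrpos : ∀ n ≤ N, 0 < r n)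
    -- the tensor `A ∈ ℝ^{I₁ × ⋯ × I_N}` (0-based component `k` is the paper index `i_{k+1}`)
    (A : ((k : Fin N) → Fin (I ((k : ℕ) + 1))) → ℝ)
    -- the orthonormal matrices `Q n ∈ ℝ^{μ_{n-1} I_n × μ_n}` for `n = 1, …, N-1`
    (Q : (n : ℕ) → Matrix (Fin (r (n - 1) * I n)) (Fin (r n)) ℝ)
    (hQ : ∀ n, 1 ≤ n → n ≤ N - 1 → (Q n)ᵀ * Q n = 1)
    -- the matrices `A_n ∈ ℝ^{μ_{n-1} I_n × (I_{n+1} ⋯ I_N)}` for `n = 1, …, N-1`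
    (Amat : (n : ℕ) →
      Matrix (Fin (r (n - 1) * I n)) (Fin (∏ t ∈ Finset.Ico n N, I (t + 1))) ℝ)
    -- `A₁` is the first unfolding `A_{([1])}` of `A`
    (hA1 : ∀ (x : (k : Fin N) → Fin (I ((k : ℕ) + 1))) (a : Fin (r 0 * I 1))
      (b : Fin (∏ t ∈ Finset.Ico 1 N, I (t + 1))),
      (a : ℕ) = pv x 0 → (b : ℕ) = ttCode I x 1 N → Amat 1 a b = A x)
    -- for `n = 2, …, N-1`, `A_n` is the reshaping of `Q_{n-1}ᵀ A_{n-1}` merging the row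
    -- index with the `I_n` index:  `A_n(s + μ_{n-1} i, j) = (Q_{n-1}ᵀ A_{n-1})(s, i + I_n j)`
    (hrec : ∀ n, 2 ≤ n → n ≤ N - 1 →
      ∀ (s : Fin (r (n - 1))) (i : Fin (I n)) (j : Fin (∏ t ∈ Finset.Ico n N, I (t + 1)))
        (a : Fin (r (n - 1) * I n)) (b : Fin (∏ t ∈ Finset.Ico (n - 1) N, I (t + 1))),
        (a : ℕ) = (s : ℕ) + r (n - 1) * (i : ℕ) →
        (b : ℕ) = (i : ℕ) + I n * (j : ℕ) →
        Amat n a j = ((Q (n - 1))ᵀ * Amat (n - 1)) s b)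
    -- the TT reconstruction `B`, with entries
    -- `B(i₁,…,i_N) = Σ_{j₁,…,j_{N-1}} Q₁(i₁,j₁) Q₂(j₁+μ₁ i₂, j₂) ⋯
    --      Q_{N-1}(j_{N-2}+μ_{N-2} i_{N-1}, j_{N-1}) · (Q_{N-1}ᵀ A_{N-1})(j_{N-1}, i_N)`
    (B : ((k : Fin N) → Fin (I ((k : ℕ) + 1))) → ℝ)
    (hB : ∀ x, B x =
      ∑ j : (nn : Fin (N - 1)) → Fin (r ((nn : ℕ) + 1)),
        (∏ nn ∈ Finset.range (N - 1),
          matExt (Q (nn + 1)) ((if nn = 0 then 0 else pv j (nn - 1)) + r nn * pv x nn)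
            (pv j nn)) *
          matExt ((Q (N - 1))ᵀ * Amat (N - 1)) (pv j (N - 2)) (pv x (N - 1)))
    :
    tnorm (fun x => A x - B x) ≤
      ∑ n ∈ Finset.Icc 1 (N - 1), frobNorm (Amat n - Q n * (Q n)ᵀ * Amat n) := by
  obtain ⟨N₀, rfl⟩ : ∃ m, N = m + 2 := ⟨N - 2, by omega⟩
  clear hN hrN
  have hQa : ∀ k, 1 ≤ k → k ≤ N₀ + 1 → (Q k)ᵀ * Q k = 1 := hQ
  set MB : Matrix (Fin (r (N₀ + 1) * I (N₀ + 2)))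
      (Fin (∏ t ∈ Finset.Ico (N₀ + 2) (N₀ + 2), I (t + 1))) ℝ :=
    fun p _ => matExt ((Q (N₀ + 1))ᵀ * Amat (N₀ + 1)) ((p : ℕ) % r (N₀ + 1))
      ((p : ℕ) / r (N₀ + 1)) with hMB
  set T : ℕ → ((k : Fin (N₀ + 2)) → Fin (I ((k : ℕ) + 1))) → ℝ :=
    fun i => if i ≤ N₀ then Cfun (N₀ + 2) I r Q i (Amat (i + 1))
      else Cfun (N₀ + 2) I r Q (N₀ + 1) MB with hT
  -- step lemma (generic case)
  have hstepa : ∀ i, i < N₀ →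
      stepn (N₀ + 2) I r Q i (Amat (i + 2))
        = Q (i + 1) * ((Q (i + 1))ᵀ * Amat (i + 1)) := by
    intro i hilt
    ext a b
    show (∑ s : Fin (r (i + 1)), Q (i + 1) a s *
        matExt (Amat (i + 2)) ((s : ℕ) + r (i + 1) * ((b : ℕ) % I (i + 2)))
          ((b : ℕ) / I (i + 2))) = _
    rw [Matrix.mul_apply]
    refine Finset.sum_congr rfl fun s _ => ?_
    congr 1
    have hprod : ∏ t ∈ Finset.Ico (i + 1) (N₀ + 2), I (t + 1)
        = I (i + 2) * ∏ t ∈ Finset.Ico (i + 2) (N₀ + 2), I (t + 1) :=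
      Finset.prod_eq_prod_Ico_succ_bot (by omega) _
    have hb2 : (b : ℕ) < I (i + 2) * ∏ t ∈ Finset.Ico (i + 2) (N₀ + 2), I (t + 1) := by
      rw [← hprod]; exact b.2
    have hI : 0 < I (i + 2) := mul_pos_left (lt_of_le_of_lt (Nat.zero_le _) hb2)
    have hmod : (b : ℕ) % I (i + 2) < I (i + 2) := Nat.mod_lt _ hI
    have hdiv : (b : ℕ) / I (i + 2) < ∏ t ∈ Finset.Ico (i + 2) (N₀ + 2), I (t + 1) :=
      Nat.div_lt_of_lt_mul hb2
    have hrow : (s : ℕ) + r (i + 1) * ((b : ℕ) % I (i + 2)) < r (i + 1) * I (i + 2) := by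
      have h1 : (s : ℕ) + r (i + 1) * ((b : ℕ) % I (i + 2))
          < r (i + 1) * (((b : ℕ) % I (i + 2)) + 1) := by
        rw [Nat.mul_add, Nat.mul_one]; have := s.2; omega
      exact lt_of_lt_of_le h1 (Nat.mul_le_mul_left _ (by omega))
    rw [matExt_of_lt _ hrow hdiv]
    exact hrec (i + 2) (by omega) (by omega) s ⟨(b : ℕ) % I (i + 2), hmod⟩
      ⟨(b : ℕ) / I (i + 2), hdiv⟩ ⟨_, hrow⟩ b rfl (Nat.mod_add_div _ _).symm
  -- step lemma (last case)
  have hstepb : stepn (N₀ + 2) I r Q N₀ MB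
      = Q (N₀ + 1) * ((Q (N₀ + 1))ᵀ * Amat (N₀ + 1)) := by
    ext a b
    show (∑ s : Fin (r (N₀ + 1)), Q (N₀ + 1) a s *
        matExt MB ((s : ℕ) + r (N₀ + 1) * ((b : ℕ) % I (N₀ + 2)))
          ((b : ℕ) / I (N₀ + 2))) = _
    rw [Matrix.mul_apply]
    refine Finset.sum_congr rfl fun s _ => ?_
    congr 1
    have hsing : ∏ t ∈ Finset.Ico (N₀ + 1) (N₀ + 2), I (t + 1) = I (N₀ + 2) := by
      rw [Finset.prod_eq_prod_Ico_succ_bot (by omega), Finset.Ico_self,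
        Finset.prod_empty, mul_one]
    have hbI : (b : ℕ) < I (N₀ + 2) := hsing ▸ b.2
    have hr1 : 0 < r (N₀ + 1) := hrpos (N₀ + 1) (by omega)
    rw [Nat.mod_eq_of_lt hbI, Nat.div_eq_of_lt hbI]
    have hrow : (s : ℕ) + r (N₀ + 1) * (b : ℕ) < r (N₀ + 1) * I (N₀ + 2) := by
      have h1 : (s : ℕ) + r (N₀ + 1) * (b : ℕ) < r (N₀ + 1) * ((b : ℕ) + 1) := by
        rw [Nat.mul_add, Nat.mul_one]; have := s.2; omega
      exact lt_of_lt_of_le h1 (Nat.mul_le_mul_left _ (by omega))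
    have hone : (0 : ℕ) < ∏ t ∈ Finset.Ico (N₀ + 2) (N₀ + 2), I (t + 1) := by simp
    rw [matExt_of_lt MB hrow hone]
    show matExt ((Q (N₀ + 1))ᵀ * Amat (N₀ + 1))
        (((s : ℕ) + r (N₀ + 1) * (b : ℕ)) % r (N₀ + 1))
        (((s : ℕ) + r (N₀ + 1) * (b : ℕ)) / r (N₀ + 1)) = _
    rw [Nat.add_mul_mod_self_left, Nat.mod_eq_of_lt s.2,
      Nat.add_mul_div_left _ _ hr1, Nat.div_eq_of_lt s.2, Nat.zero_add]
    rw [matExt_of_lt _ s.2 b.2]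
  -- endpoints
  have hT0 : ∀ x, T 0 x = A x := by
    intro x
    rw [hT]
    simp only [Nat.zero_le, if_pos]
    show matExt (Amat 1) (pv x 0) (ttCode I x 1 (N₀ + 2)) = A x
    have h1 : pv x 0 < r 0 * I 1 := by
      rw [hr0, one_mul]; exact pv_lt' x (by omega)
    have h2 : ttCode I x 1 (N₀ + 2) < ∏ t ∈ Finset.Ico 1 (N₀ + 2), I (t + 1) :=
      ttCode_lt x le_rfl
    rw [matExt_of_lt _ h1 h2]
    exact hA1 x ⟨_, h1⟩ ⟨_, h2⟩ rfl rfl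
  have hTlast : ∀ x, T (N₀ + 1) x = B x := by
    intro x
    simp only [hT]
    rw [if_neg (by omega : ¬ (N₀ + 1 ≤ N₀))]
    rw [Cfun_formula hr0 (N₀ + 1) le_rfl MB x, hB x]
    refine Finset.sum_congr rfl fun j _ => ?_
    congr 1
    show matExt MB ((if N₀ + 1 = 0 then 0 else pv j (N₀ + 1 - 1)) + r (N₀ + 1) * pv x (N₀ + 1))
        (ttCode I x (N₀ + 2) (N₀ + 2)) = _
    rw [if_neg (by omega), ttCode_of_le x le_rfl]
    have hpj : pv j N₀ < r (N₀ + 1) := pv_lt j (by omega : N₀ < N₀ + 1)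
    have hpx : pv x (N₀ + 1) < I (N₀ + 2) := pv_lt' x (by omega)
    have hrow : pv j N₀ + r (N₀ + 1) * pv x (N₀ + 1) < r (N₀ + 1) * I (N₀ + 2) := by
      have h1 : pv j N₀ + r (N₀ + 1) * pv x (N₀ + 1)
          < r (N₀ + 1) * (pv x (N₀ + 1) + 1) := by
        rw [Nat.mul_add, Nat.mul_one]; omega
      exact lt_of_lt_of_le h1 (Nat.mul_le_mul_left _ (by omega))
    have hone : (0 : ℕ) < ∏ t ∈ Finset.Ico (N₀ + 2) (N₀ + 2), I (t + 1) := by simp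
    have hr1 : 0 < r (N₀ + 1) := hrpos (N₀ + 1) (by omega)
    rw [show (pv j (N₀ + 1 - 1) : ℕ) = pv j N₀ from rfl]
    rw [matExt_of_lt MB hrow hone]
    show matExt ((Q (N₀ + 1))ᵀ * Amat (N₀ + 1))
        ((pv j N₀ + r (N₀ + 1) * pv x (N₀ + 1)) % r (N₀ + 1))
        ((pv j N₀ + r (N₀ + 1) * pv x (N₀ + 1)) / r (N₀ + 1)) = _
    rw [Nat.add_mul_mod_self_left, Nat.mod_eq_of_lt hpj,
      Nat.add_mul_div_left _ _ hr1, Nat.div_eq_of_lt hpj, Nat.zero_add]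
    rfl
  -- the telescoping differences
  have hdiffs : ∀ i, i ≤ N₀ → ∀ x, T i x - T (i + 1) x
      = Cfun (N₀ + 2) I r Q i
          (Amat (i + 1) - Q (i + 1) * (Q (i + 1))ᵀ * Amat (i + 1)) x := by
    intro i hi x
    rw [Cfun_sub]
    congr 1
    · simp only [hT]; rw [if_pos hi]
    · rcases Nat.lt_or_ge i N₀ with hlt | hge
      · simp only [hT]
        rw [if_pos (by omega : i + 1 ≤ N₀)]
        show Cfun (N₀ + 2) I r Q i (stepn (N₀ + 2) I r Q i (Amat (i + 2))) x = _
        rw [hstepa i hlt, ← Matrix.mul_assoc]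
      · have hieq : i = N₀ := by omega
        subst hieq
        simp only [hT]
        rw [if_neg (by omega : ¬ (i + 1 ≤ i))]
        show Cfun (i + 2) I r Q i (stepn (i + 2) I r Q i MB) x = _
        rw [hstepb, ← Matrix.mul_assoc]
  have hnorm : ∀ i, i ≤ N₀ → tnorm (fun x => T i x - T (i + 1) x)
      = frobNorm (Amat (i + 1) - Q (i + 1) * (Q (i + 1))ᵀ * Amat (i + 1)) := by
    intro i hi
    unfold tnorm frobNorm
    congr 1
    simp only [hdiffs i hi]
    exact Cfun_sum_sq hr0 hQa i (by omega) _
  -- Euclidean-space norm machinery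
  set e : (((k : Fin (N₀ + 2)) → Fin (I ((k : ℕ) + 1))) → ℝ) →
      EuclideanSpace ℝ ((k : Fin (N₀ + 2)) → Fin (I ((k : ℕ) + 1))) :=
    fun g => (WithLp.equiv 2 _).symm g with he
  have htn : ∀ g : ((k : Fin (N₀ + 2)) → Fin (I ((k : ℕ) + 1))) → ℝ,
      tnorm g = ‖e g‖ := by
    intro g
    rw [he, EuclideanSpace.norm_eq]
    unfold tnorm
    congr 1
    refine Finset.sum_congr rfl fun x _ => ?_
    rw [Real.norm_eq_abs, sq_abs]
    rfl
  have hsum : ∀ x, A x - B x = ∑ i ∈ Finset.range (N₀ + 1), (T i x - T (i + 1) x) := by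
    intro x
    rw [Finset.sum_range_sub' (f := fun i => T i x), hT0 x, hTlast x]
  have he2 : ∀ (s : Finset ℕ),
      e (fun x => ∑ i ∈ s, (T i x - T (i + 1) x))
      = ∑ i ∈ s, e (fun x => T i x - T (i + 1) x) := by
    intro s
    induction s using Finset.cons_induction with
    | empty => simp only [Finset.sum_empty]; rfl
    | cons a s ha ih =>
      simp only [Finset.sum_cons]
      rw [← ih]
      rfl
  have step1 : tnorm (fun x => A x - B x)
      ≤ ∑ i ∈ Finset.range (N₀ + 1), tnorm (fun x => T i x - T (i + 1) x) := by
    rw [show (fun x => A x - B x)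
        = fun x => ∑ i ∈ Finset.range (N₀ + 1), (T i x - T (i + 1) x) from funext hsum]
    rw [htn, he2 (Finset.range (N₀ + 1))]
    refine le_trans (norm_sum_le _ _) ?_
    refine Finset.sum_le_sum fun i _ => ?_
    rw [← htn]
  refine le_trans step1 ?_
  show _ ≤ ∑ n ∈ Finset.Icc 1 (N₀ + 1), frobNorm (Amat n - Q n * (Q n)ᵀ * Amat n)
  rw [← Finset.Ico_add_one_right_eq_Icc, Finset.sum_Ico_eq_sum_range]
  rw [show Finset.range (N₀ + 1 + 1 - 1) = Finset.range (N₀ + 1) from rfl]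
  refine le_of_eq (Finset.sum_congr rfl fun i hi => ?_)
  rw [Finset.mem_range] at hi
  rw [hnorm i (by omega), show 1 + i = i + 1 from Nat.add_comm 1 i]
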